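/- Let Σ be a finite alphabet and let L ⊆ Σ* be a bounded language. Then L is well-quasi-ordered by the infix relation if and only if its infix-downward closure {u ∈ Σ* | u is an infix of some v ∈ L} is well-quasi-ordered by the infix relation. -/

import Mathlib

/-- The `p`-fold concatenation of the word `x`. -/
def wpow {A : Type*} (x : List A) (p : ℕ) : List A := (List.replicate p x).flatten

/-- A subset `L` of words is well-quasi-ordered by the relation `r`. -/
def IsWqoOn {A : Type*} (L : Set (List A)) (r : List A → List A → Prop) : Prop :=
  ∀ f : ℕ → List A, (∀ n, f n ∈ L) → ∃ i j, i < j ∧ r (f i) (f j)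

/-- A language is bounded if it is contained in `w₁* ⋯ w_n*` for some words `wᵢ`. -/
def IsBoundedLang {A : Type*} (L : Set (List A)) : Prop :=
  ∃ (n : ℕ) (w : Fin n → List A), ∀ u ∈ L, ∃ c : Fin n → ℕ,
    u = (List.ofFn fun i : Fin n => wpow (w i) (c i)).flatten

namespace BWQO
variable {A : Type*}

lemma wpow_zero (b : List A) : wpow b 0 = [] := rfl

lemma wpow_succ (b : List A) (a : ℕ) : wpow b (a+1) = b ++ wpow b a := by
  simp [wpow, List.replicate_succ]

lemma wpow_one (b : List A) : wpow b 1 = b := by simp [wpow]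

lemma wpow_comm (b : List A) (a : ℕ) : wpow b a ++ b = b ++ wpow b a := by
  induction a with
  | zero => simp [wpow]
  | succ n ih => rw [wpow_succ]; rw [List.append_assoc, ih]

lemma wpow_succ' (b : List A) (a : ℕ) : wpow b (a+1) = wpow b a ++ b := by
  rw [wpow_succ, ← wpow_comm]

lemma length_wpow (b : List A) (a : ℕ) : (wpow b a).length = a * b.length := by
  induction a with
  | zero => simp [wpow]
  | succ n ih => rw [wpow_succ]; simp [ih]; ring

lemma reverse_wpow (b : List A) (a : ℕ) : (wpow b a).reverse = wpow b.reverse a := by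
  induction a with
  | zero => simp [wpow]
  | succ n ih => rw [wpow_succ, wpow_succ']; simp [ih]

lemma wpow_nil (a : ℕ) : wpow ([] : List A) a = [] := by
  induction a with
  | zero => rfl
  | succ n ih => rw [wpow_succ, ih]; rfl

lemma getD_wpow (b : List A) (a : ℕ) (t : ℕ) (d : A) (ht : t < a * b.length) :
    (wpow b a).getD t d = b.getD (t % b.length) d := by
  induction a generalizing t with
  | zero => simp at ht
  | succ n ih =>
    rw [wpow_succ]
    rcases lt_or_ge t b.length with h | h
    · rw [List.getD_append _ _ _ _ h, Nat.mod_eq_of_lt h]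
    · rw [List.getD_append_right _ _ _ _ h]
      have hb : 0 < b.length := by
        rcases Nat.eq_zero_or_pos b.length with h0 | h0
        · rw [h0, Nat.mul_zero] at ht; omega
        · exact h0
      have : (t - b.length) % b.length = t % b.length := by
        conv_rhs => rw [← Nat.sub_add_cancel h]
        rw [Nat.add_mod_right]
      rw [← this]
      apply ih
      have : (n+1) * b.length = n * b.length + b.length := by ring
      omega

/-- membership in the bounded language given by a list of blocks -/
def MemB : List (List A) → List A → Prop
  | [], u => u = []
  | b :: bs, u => ∃ a r, MemB bs r ∧ u = wpow b a ++ r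

lemma MemB_nil_iff (u : List A) : MemB [] u ↔ u = [] := Iff.rfl

lemma MemB_append {bs1 bs2 : List (List A)} {u1 u2 : List A}
    (h1 : MemB bs1 u1) (h2 : MemB bs2 u2) : MemB (bs1 ++ bs2) (u1 ++ u2) := by
  induction bs1 generalizing u1 with
  | nil => rw [MemB_nil_iff] at h1; subst h1; simpa using h2
  | cons b bs ih =>
    obtain ⟨a, r, hr, rfl⟩ := h1
    exact ⟨a, r ++ u2, ih hr, by simp⟩

lemma MemB_single (b : List A) (a : ℕ) : MemB [b] (wpow b a) :=
  ⟨a, [], rfl, by simp⟩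

lemma MemB_ofFn (n : ℕ) (w : Fin n → List A) (c : Fin n → ℕ) :
    MemB (List.ofFn w) ((List.ofFn fun i : Fin n => wpow (w i) (c i)).flatten) := by
  induction n with
  | zero => simp [MemB]
  | succ m ih =>
    rw [List.ofFn_succ, List.ofFn_succ, List.flatten_cons]
    exact ⟨c 0, _, ih (fun i => w i.succ) (fun i => c i.succ), rfl⟩

lemma MemB_reverse {ws : List (List A)} {v : List A} (h : MemB ws v) :
    MemB ((ws.map List.reverse).reverse) v.reverse := by
  induction ws generalizing v with
  | nil => rw [MemB_nil_iff] at h; subst h; simp [MemB]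
  | cons b bs ih =>
    obtain ⟨a, r, hr, rfl⟩ := h
    have : ((b :: bs).map List.reverse).reverse = (bs.map List.reverse).reverse ++ [b.reverse] := by
      simp
    rw [this, List.reverse_append, reverse_wpow]
    exact MemB_append (ih hr) (MemB_single _ a)

lemma prefix_append_cases {u X Y : List A} (h : u <+: X ++ Y) :
    u <+: X ∨ ∃ q, u = X ++ q ∧ q <+: Y := by
  rcases List.prefix_or_prefix_of_prefix h (List.prefix_append X Y) with h1 | h1
  · exact Or.inl h1
  · obtain ⟨q, rfl⟩ := h1
    right
    refine ⟨q, rfl, ?_⟩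
    obtain ⟨t, ht⟩ := h
    rw [List.append_assoc] at ht
    exact ⟨t, List.append_cancel_left ht⟩

lemma suffix_append_cases {u X Y : List A} (h : u <:+ X ++ Y) :
    u <:+ Y ∨ ∃ q, u = q ++ Y ∧ q <:+ X := by
  have h' : u.reverse <+: Y.reverse ++ X.reverse := by
    rw [← List.reverse_append]; exact List.reverse_prefix.mpr h
  rcases prefix_append_cases h' with h1 | ⟨q, hq, hqX⟩
  · exact Or.inl (List.reverse_prefix.mp h1)
  · right
    refine ⟨q.reverse, ?_, ?_⟩
    · have := congrArg List.reverse hq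
      simpa using this
    · have : q.reverse.reverse <+: X.reverse := by simpa using hqX
      exact List.reverse_prefix.mp this

lemma infix_append_cases {u X Y : List A} (h : u <:+: X ++ Y) :
    u <:+: X ∨ u <:+: Y ∨ ∃ s p, s <:+ X ∧ p <+: Y ∧ u = s ++ p := by
  obtain ⟨pre, post, hh⟩ := h
  have hpre : pre <+: X ++ Y := ⟨u ++ post, by rw [← hh]; simp⟩
  rcases le_or_gt X.length pre.length with hl | hl
  · have hXpre : X <+: pre :=
      List.prefix_of_prefix_length_le (List.prefix_append X Y) hpre hl
    obtain ⟨q, rfl⟩ := hXpre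
    have h2 : q ++ (u ++ post) = Y :=
      by
      have h' := hh
      simp only [List.append_assoc] at h'
      exact List.append_cancel_left h'
    exact Or.inr (Or.inl ⟨q, post, by rw [List.append_assoc]; exact h2⟩)
  · have hpreX : pre <+: X :=
      List.prefix_of_prefix_length_le hpre (List.prefix_append X Y) (le_of_lt hl)
    obtain ⟨m, rfl⟩ := hpreX
    have hum : u ++ post = m ++ Y := by
      have h' := hh
      simp only [List.append_assoc] at h'
      exact List.append_cancel_left h'
    rcases le_or_gt u.length m.length with hl2 | hl2
    · have hum' : u <+: m :=
        List.prefix_of_prefix_length_le ⟨post, hum⟩ (List.prefix_append m Y) hl2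
      exact Or.inl (hum'.isInfix.trans (List.suffix_append pre m).isInfix)
    · have hmu : m <+: u :=
        List.prefix_of_prefix_length_le (List.prefix_append m Y) ⟨post, hum⟩ (le_of_lt hl2)
      obtain ⟨p, rfl⟩ := hmu
      have hpY : p ++ post = Y := by
        have h' := hum
        simp only [List.append_assoc] at h'
        exact List.append_cancel_left h'
      exact Or.inr (Or.inr ⟨m, p, List.suffix_append pre m, ⟨post, hpY⟩, rfl⟩)

lemma infix_eq_drop_take {u v : List A} (h : u <:+: v) :
    ∃ m, m ≤ v.length ∧ u = (v.drop m).take u.length := by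
  obtain ⟨pre, post, hh⟩ := h
  refine ⟨pre.length, ?_, ?_⟩
  · rw [← hh]; simp
  · rw [← hh, List.append_assoc, List.drop_left, List.take_left]

lemma drop_take_infix (v : List A) (m n : ℕ) : (v.drop m).take n <:+: v :=
  (List.take_prefix n (v.drop m)).isInfix.trans (List.drop_suffix m v).isInfix

lemma prefix_wpow {p₁ b : List A} {a : ℕ} (h : p₁ <+: wpow b a) :
    ∃ a' p, p <+: b ∧ p₁ = wpow b a' ++ p := by
  induction a generalizing p₁ with
  | zero =>
    rw [wpow_zero, List.prefix_nil] at h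
    exact ⟨0, [], List.nil_prefix, by simp [h, wpow_zero]⟩
  | succ n ih =>
    rw [wpow_succ] at h
    rcases prefix_append_cases h with h1 | ⟨q, rfl, hq⟩
    · exact ⟨0, p₁, h1, by simp [wpow_zero]⟩
    · obtain ⟨a', p, hp, rfl⟩ := ih hq
      exact ⟨a' + 1, p, hp, by rw [wpow_succ]; simp⟩

lemma suffix_wpow {s₁ b : List A} {a : ℕ} (h : s₁ <:+ wpow b a) :
    ∃ s a', s <:+ b ∧ s₁ = s ++ wpow b a' := by
  induction a generalizing s₁ with
  | zero =>
    rw [wpow_zero, List.suffix_nil] at h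
    exact ⟨[], 0, List.nil_suffix, by simp [h, wpow_zero]⟩
  | succ n ih =>
    rw [wpow_succ'] at h
    rcases suffix_append_cases h with h1 | ⟨q, rfl, hq⟩
    · exact ⟨s₁, 0, h1, by simp [wpow_zero]⟩
    · obtain ⟨s, a', hs, rfl⟩ := ih hq
      exact ⟨s, a' + 1, hs, by rw [wpow_succ']; simp⟩

lemma infix_wpow {u b : List A} {a : ℕ} (h : u <:+: wpow b a) :
    ∃ s a' p, s <:+: b ∧ p <+: b ∧ u = s ++ wpow b a' ++ p := by
  induction a generalizing u with
  | zero =>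
    rw [wpow_zero, List.infix_nil] at h
    exact ⟨[], 0, [], List.nil_infix, List.nil_prefix, by simp [h, wpow_zero]⟩
  | succ n ih =>
    rw [wpow_succ] at h
    rcases infix_append_cases h with h1 | h1 | ⟨s, p, hs, hp, rfl⟩
    · exact ⟨u, 0, [], h1, List.nil_prefix, by simp [wpow_zero]⟩
    · exact ih h1
    · obtain ⟨a', p', hp', rfl⟩ := prefix_wpow hp
      exact ⟨s, a', p', hs.isInfix, hp', by simp⟩


lemma memB_pair_nil : MemB ([[], []] : List (List A)) [] :=
  ⟨0, [], ⟨0, [], rfl, by simp [wpow_zero]⟩, by simp [wpow_zero]⟩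

lemma prefix_memB {bs : List (List A)} {r p₁ : List A} (hr : MemB bs r) (hp : p₁ <+: r) :
    ∃ t j p', t ≤ bs.length ∧ j ≤ bs.length ∧ p' <+: bs.getD j [] ∧
      MemB (bs.take t ++ [p']) p₁ := by
  induction bs generalizing r p₁ with
  | nil =>
    rw [MemB_nil_iff] at hr; subst hr
    rw [List.prefix_nil] at hp; subst hp
    exact ⟨0, 0, [], by simp, by simp, by simp, ⟨0, [], rfl, by simp [wpow_zero]⟩⟩
  | cons b bs ih =>
    obtain ⟨a, r', hr', rfl⟩ := hr
    rcases prefix_append_cases hp with h1 | ⟨q, rfl, hq⟩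
    · obtain ⟨a₂, p, hpb, rfl⟩ := prefix_wpow h1
      refine ⟨1, 0, p, by simp, by simp, by simpa using hpb, ?_⟩
      exact ⟨a₂, p, ⟨1, [], rfl, by simp [wpow_one]⟩, by simp⟩
    · obtain ⟨t, j, p', ht, hj, hp', hmem⟩ := ih hr' hq
      refine ⟨t + 1, j + 1, p', by simpa using ht, by simpa using hj, by simpa using hp', ?_⟩
      exact ⟨a, q, hmem, rfl⟩

/-- sum of lengths -/
def ML (ws : List (List A)) : ℕ := (ws.map List.length).sum

lemma getD_length_le (ws : List (List A)) (j : ℕ) :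
    (ws.getD j []).length ≤ ML ws := by
  induction ws generalizing j with
  | nil => simp [ML]
  | cons b bs ih =>
    cases j with
    | zero => simp [ML]
    | succ j => simpa [ML] using le_trans (ih j) (by simp [ML])

lemma ML_cons_le (b : List A) (bs : List (List A)) : ML bs ≤ ML (b :: bs) := by
  simp [ML]

lemma length_head_le (b : List A) (bs : List (List A)) : b.length ≤ ML (b :: bs) := by
  simp [ML]

/-- Claim A : every infix of a bounded-language word is an exact member of one of
finitely many bounded languages, coded by six bounded numbers. -/
lemma infix_memB {ws : List (List A)} {v u : List A} (hv : MemB ws v) (hu : u <:+: v) :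
    ∃ i t x y j pk, i ≤ ws.length ∧ t ≤ ws.length ∧ x ≤ ML ws ∧ y ≤ ML ws ∧ j ≤ ws.length ∧
      pk ≤ ML ws ∧
      MemB ((((ws.getD i []).drop x).take y) :: ((ws.drop i).take t ++ [(ws.getD j []).take pk])) u := by
  induction ws generalizing v u with
  | nil =>
    rw [MemB_nil_iff] at hv; subst hv
    rw [List.infix_nil] at hu; subst hu
    exact ⟨0, 0, 0, 0, 0, 0, by simp, by simp, by simp, by simp, by simp, by simp,
      by simpa using memB_pair_nil⟩
  | cons b bs ih =>
    obtain ⟨a, r, hr, rfl⟩ := hv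
    rcases infix_append_cases hu with h1 | h1 | ⟨s₁, p₁, hs₁, hp₁, rfl⟩
    · -- inside the first power
      obtain ⟨s, a', p, hs, hp, rfl⟩ := infix_wpow h1
      obtain ⟨x, hx, hsx⟩ := infix_eq_drop_take hs
      have hy : s.length ≤ b.length := hs.length_le
      have hpk : p.length ≤ b.length := hp.length_le
      refine ⟨0, 1, x, s.length, 0, p.length, by simp, by simp,
        le_trans hx (length_head_le b bs), le_trans hy (length_head_le b bs), by simp,
        le_trans hpk (length_head_le b bs), ?_⟩
      simp only [List.getD_cons_zero, List.drop_zero, List.take_succ_cons, List.take_zero]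
      rw [← hsx, ← (List.prefix_iff_eq_take.mp hp)]
      exact ⟨1, wpow b a' ++ p, ⟨a', p, ⟨1, [], rfl, by simp [wpow_one]⟩, rfl⟩,
        by simp [wpow_one]⟩
    · -- inside the rest
      obtain ⟨i, t, x, y, j, pk, hi, ht, hx, hy, hj, hpk, hmem⟩ := ih hr h1
      have hB := ML_cons_le b bs
      exact ⟨i + 1, t, x, y, j + 1, pk, by simp; omega, by simp; omega, le_trans hx hB,
        le_trans hy hB, by simp; omega, le_trans hpk hB, by simpa using hmem⟩
    · -- straddling
      obtain ⟨s, a'', hs, rfl⟩ := suffix_wpow hs₁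
      obtain ⟨t', j', p', ht', hj', hp', hmem⟩ := prefix_memB hr hp₁
      obtain ⟨x, hx, hsx⟩ := infix_eq_drop_take hs.isInfix
      have hy : s.length ≤ b.length := hs.length_le
      have hpk : p'.length ≤ (bs.getD j' []).length := hp'.length_le
      have hpk2 : p'.length ≤ ML (b :: bs) :=
        le_trans hpk (le_trans (getD_length_le bs j') (ML_cons_le b bs))
      refine ⟨0, t' + 1, x, s.length, j' + 1, p'.length,
        by simp, by simp; omega, le_trans hx (length_head_le b bs),
        le_trans hy (length_head_le b bs), by simp; omega, hpk2, ?_⟩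
      simp only [List.getD_cons_zero, List.drop_zero, List.take_succ_cons, List.getD_cons_succ]
      rw [← hsx, ← (List.prefix_iff_eq_take.mp hp')]
      refine ⟨1, wpow b a'' ++ p₁, ⟨a'', p₁, ?_, rfl⟩, by simp [wpow_one]⟩
      exact hmem

lemma pigeon {β : Type*} (S : Set ℕ) (hS : S.Infinite) (g : ℕ → β) (T : Finset β)
    (hg : ∀ ℓ ∈ S, g ℓ ∈ T) : ∃ σ, {ℓ | ℓ ∈ S ∧ g ℓ = σ}.Infinite := by
  by_contra hcon
  push_neg at hcon
  apply hS
  have hsub : S ⊆ ⋃ σ ∈ T, {ℓ | ℓ ∈ S ∧ g ℓ = σ} := by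
    intro ℓ hℓ
    exact Set.mem_biUnion (hg ℓ hℓ) ⟨hℓ, rfl⟩
  exact Set.Finite.subset (Set.Finite.biUnion T.finite_toSet (fun σ _ => hcon σ)) hsub

/-- prefix of length `ℓ` of an infinite word -/
def prefW (W : ℕ → A) (ℓ : ℕ) : List A := (List.range ℓ).map W

@[simp] lemma length_prefW (W : ℕ → A) (ℓ : ℕ) : (prefW W ℓ).length = ℓ := by
  simp [prefW]

lemma prefW_add (W : ℕ → A) (m k : ℕ) :
    prefW W (m + k) = prefW W m ++ prefW (fun z => W (m + z)) k := by
  simp [prefW, List.range_add, List.map_map, Function.comp]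

lemma getD_prefW (W : ℕ → A) (ℓ t : ℕ) (d : A) (ht : t < ℓ) :
    (prefW W ℓ).getD t d = W t := by
  rw [List.getD_eq_getElem?_getD]
  simp [prefW, List.getElem?_map, List.getElem?_range ht]

lemma getD_prefix {u v : List A} (h : u <+: v) (t : ℕ) (d : A) (ht : t < u.length) :
    u.getD t d = v.getD t d := by
  obtain ⟨q, rfl⟩ := h
  rw [List.getD_append _ _ _ _ ht]

/-- Lemma P'' : if infinitely many prefixes of `W` lie in a fixed bounded language,
then `W` is ultimately periodic. -/
lemma lemP'' (bs : List (List A)) :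
    ∀ (W : ℕ → A) (S : Set ℕ), S.Infinite → (∀ ℓ ∈ S, MemB bs (prefW W ℓ)) →
    ∃ M d : ℕ, 0 < d ∧ ∀ z, M ≤ z → W z = W (z + d) := by
  induction bs with
  | nil =>
    intro W S hS h
    exfalso
    apply hS
    apply Set.Finite.subset (Set.finite_singleton 0)
    intro ℓ hℓ
    have := h ℓ hℓ
    rw [MemB_nil_iff] at this
    have : ℓ = 0 := by
      have := congrArg List.length this
      simpa using this
    simp [this]
  | cons b bs ih =>
    intro W S hS h
    -- totalize the choice
    have h' : ∀ ℓ, ∃ a r, ℓ ∈ S → (MemB bs r ∧ prefW W ℓ = wpow b a ++ r) := by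
      intro ℓ
      by_cases hℓ : ℓ ∈ S
      · obtain ⟨a, r, hr, heq⟩ := h ℓ hℓ
        exact ⟨a, r, fun _ => ⟨hr, heq⟩⟩
      · exact ⟨0, [], fun hc => absurd hc hℓ⟩
    choose a r har using h'
    rcases List.eq_nil_or_concat b with hb | ⟨_, _, hbne⟩
    · -- empty block : drop it
      subst hb
      apply ih W S hS
      intro ℓ hℓ
      obtain ⟨hr, heq⟩ := har ℓ hℓ
      rw [wpow_nil, List.nil_append] at heq
      rw [heq]; exact hr
    · have hb : b ≠ [] := by rintro rfl; simp at hbne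
      have hbl : 0 < b.length := List.length_pos_iff.mpr hb
      by_cases hU : ∀ K, ∃ ℓ ∈ S, K ≤ a ℓ
      · -- unbounded exponents : globally periodic with period |b|
        refine ⟨0, b.length, hbl, ?_⟩
        intro z _
        obtain ⟨ℓ, hℓS, hK⟩ := hU (z + b.length + 1)
        obtain ⟨hr, heq⟩ := har ℓ hℓS
        have hlen : a ℓ * b.length + (r ℓ).length = ℓ := by
          have := congrArg List.length heq
          simpa [length_wpow] using this.symm
        have hz2 : z + b.length < a ℓ * b.length := by
          have : a ℓ ≤ a ℓ * b.length := Nat.le_mul_of_pos_right _ hbl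
          omega
        have hzℓ : z + b.length < ℓ := by omega
        have hpw : wpow b (a ℓ) <+: prefW W ℓ := ⟨r ℓ, heq.symm⟩
        have key : ∀ t, t < a ℓ * b.length → W t = b.getD (t % b.length) (W 0) := by
          intro t ht
          have h1 : W t = (prefW W ℓ).getD t (W 0) := (getD_prefW W ℓ t (W 0) (by omega)).symm
          rw [h1, ← getD_prefix hpw t (W 0) (by rwa [length_wpow]), getD_wpow _ _ _ _ ht]
        rw [key z (by omega), key (z + b.length) hz2, Nat.add_mod_right]
      · -- bounded exponents
        push_neg at hU
        obtain ⟨K, hK⟩ := hU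
        obtain ⟨a₀, hfib⟩ := pigeon S hS a (Finset.range (K + 1))
          (fun ℓ hℓ => Finset.mem_range.mpr (by have := hK ℓ hℓ; omega))
        set off := a₀ * b.length with hoff
        have hmem : ∀ ℓ, ℓ ∈ S ∧ a ℓ = a₀ → off ≤ ℓ ∧
            MemB bs (prefW (fun z => W (off + z)) (ℓ - off)) := by
          rintro ℓ ⟨hℓS, hℓa⟩
          obtain ⟨hr, heq⟩ := har ℓ hℓS
          rw [hℓa] at heq
          have hlen : off + (r ℓ).length = ℓ := by
            have := congrArg List.length heq
            simpa [length_wpow, hoff] using this.symm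
          have hℓoff : off ≤ ℓ := by omega
          have hsplit : prefW W ℓ = prefW W off ++ prefW (fun z => W (off + z)) (ℓ - off) := by
            rw [← prefW_add]
            congr 1
            omega
          have : r ℓ = prefW (fun z => W (off + z)) (ℓ - off) := by
            have hlen2 : (wpow b a₀).length = (prefW W off).length := by
              simp [length_wpow, hoff]
            exact (List.append_inj (heq.symm.trans hsplit) hlen2).2
          exact ⟨hℓoff, this ▸ hr⟩
        have hS3 : ((fun ℓ => ℓ - off) '' {ℓ | ℓ ∈ S ∧ a ℓ = a₀}).Infinite := by
          apply Set.Infinite.image _ hfib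
          intro ℓ₁ h₁ ℓ₂ h₂ hsub
          have o1 := (hmem ℓ₁ h₁).1
          have o2 := (hmem ℓ₂ h₂).1
          have hsub' : ℓ₁ - off = ℓ₂ - off := hsub
          omega
        obtain ⟨M, d, hd, hper⟩ := ih (fun z => W (off + z)) _ hS3 (by
          rintro ℓ' ⟨ℓ, hℓ, rfl⟩
          exact (hmem ℓ hℓ).2)
        refine ⟨off + M, d, hd, ?_⟩
        intro z hz
        have := hper (z - off) (by omega)
        have e1 : off + (z - off) = z := by omega
        have e2 : off + (z - off + d) = z + d := by omega
        rwa [e1, e2] at this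

/-- Lemma P : an infinite word all of whose prefixes are infixes of words of a
bounded language is ultimately periodic. -/
lemma lemP (ws : List (List A)) (W : ℕ → A)
    (h : ∀ ℓ : ℕ, ∃ v, MemB ws v ∧ prefW W ℓ <:+: v) :
    ∃ M d : ℕ, 0 < d ∧ ∀ z, M ≤ z → W z = W (z + d) := by
  have h' : ∀ ℓ : ℕ, ∃ c : ℕ × ℕ × ℕ × ℕ × ℕ × ℕ,
      c ∈ (Finset.range (ws.length + 1) ×ˢ Finset.range (ws.length + 1) ×ˢ
        Finset.range (ML ws + 1) ×ˢ Finset.range (ML ws + 1) ×ˢ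
        Finset.range (ws.length + 1) ×ˢ Finset.range (ML ws + 1)) ∧
      MemB ((((ws.getD c.1 []).drop c.2.2.1).take c.2.2.2.1) ::
        ((ws.drop c.1).take c.2.1 ++ [(ws.getD c.2.2.2.2.1 []).take c.2.2.2.2.2])) (prefW W ℓ) := by
    intro ℓ
    obtain ⟨v, hv, hinf⟩ := h ℓ
    obtain ⟨i, t, x, y, j, pk, hi, ht, hx, hy, hj, hpk, hmem⟩ := infix_memB hv hinf
    exact ⟨(i, t, x, y, j, pk), by
      simp only [Finset.mem_product, Finset.mem_range]
      refine ⟨by omega, by omega, by omega, by omega, by omega, by omega⟩, hmem⟩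
  choose c hc hmem using h'
  obtain ⟨σ, hσ⟩ := pigeon Set.univ Set.infinite_univ c _ (fun ℓ _ => hc ℓ)
  have : ∀ ℓ ∈ {ℓ | ℓ ∈ Set.univ ∧ c ℓ = σ},
      MemB ((((ws.getD σ.1 []).drop σ.2.2.1).take σ.2.2.2.1) ::
        ((ws.drop σ.1).take σ.2.1 ++ [(ws.getD σ.2.2.2.2.1 []).take σ.2.2.2.2.2])) (prefW W ℓ) := by
    rintro ℓ ⟨-, hℓ⟩
    have := hmem ℓ
    rwa [hℓ] at this
  exact lemP'' _ W _ hσ this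

/-- segment of a bi-infinite word -/
def seg (W : ℤ → A) (x : ℤ) (ℓ : ℕ) : List A := (List.range ℓ).map (fun t : ℕ => W (x + (t : ℤ)))

@[simp] lemma length_seg (W : ℤ → A) (x : ℤ) (ℓ : ℕ) : (seg W x ℓ).length = ℓ := by
  simp [seg]

lemma seg_add (W : ℤ → A) (x : ℤ) (m k : ℕ) :
    seg W x (m + k) = seg W x m ++ seg W (x + m) k := by
  simp only [seg, List.range_add, List.map_append, List.map_map]
  congr 1
  apply List.map_congr_left
  intro t _
  simp [Function.comp]
  congr 1
  push_cast
  ring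

lemma seg_contain (W : ℤ → A) {x x' : ℤ} {ℓ ℓ' : ℕ} (hx : x' ≤ x) (hq : x + ℓ ≤ x' + ℓ') :
    seg W x ℓ <:+: seg W x' ℓ' := by
  set a := (x - x').toNat with ha
  have hxa : x' + a = x := by omega
  have hab : a + ℓ ≤ ℓ' := by omega
  set b := ℓ' - (a + ℓ) with hb
  have hℓ' : ℓ' = a + (ℓ + b) := by omega
  refine ⟨seg W x' a, seg W (x + ℓ) b, ?_⟩
  rw [hℓ', seg_add, seg_add, hxa]
  simp [List.append_assoc]

lemma seg_shift {W : ℤ → A} {M d : ℤ} (hper : ∀ z, M ≤ z → W z = W (z + d))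
    {y : ℤ} (hy : M ≤ y) (ℓ : ℕ) : seg W y ℓ = seg W (y + d) ℓ := by
  apply List.map_congr_left
  intro t _
  have := hper (y + t) (by omega)
  rw [this]
  congr 1
  ring

lemma seg_shift_iter {W : ℤ → A} {M d : ℤ} (hd : 0 ≤ d)
    (hper : ∀ z, M ≤ z → W z = W (z + d)) (j : ℕ) :
    ∀ {y : ℤ}, M ≤ y → ∀ ℓ, seg W y ℓ = seg W (y + j * d) ℓ := by
  induction j with
  | zero => intro y _ ℓ; simp
  | succ n ih =>
    intro y hy ℓ
    rw [seg_shift hper hy ℓ, ih (by omega) ℓ]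
    congr 1
    push_cast
    ring

lemma seg_congr_mod {W : ℤ → A} {M d : ℤ} (hd : 0 < d)
    (hper : ∀ z, M ≤ z → W z = W (z + d)) {y y' : ℤ} (hy : M ≤ y) (hy' : M ≤ y')
    (hdvd : d ∣ y' - y) (ℓ : ℕ) : seg W y ℓ = seg W y' ℓ := by
  rcases le_total y y' with hle | hle
  · obtain ⟨k, hk⟩ := hdvd
    have hk0 : 0 ≤ k := by nlinarith
    have := seg_shift_iter (le_of_lt hd) hper k.toNat hy ℓ
    rw [this]
    congr 1
    have h1 : (k.toNat : ℤ) = k := Int.toNat_of_nonneg hk0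
    rw [h1]
    have h2 : k * d = d * k := mul_comm _ _
    omega
  · obtain ⟨k, hk⟩ := hdvd
    have hk0 : k ≤ 0 := by nlinarith
    have := seg_shift_iter (le_of_lt hd) hper (-k).toNat hy' ℓ
    rw [this]
    congr 1
    have h1 : ((-k).toNat : ℤ) = -k := Int.toNat_of_nonneg (by nlinarith)
    rw [h1]
    have h2 : -k * d = -(d * k) := by ring
    omega

lemma seg_infix_periodic {W : ℤ → A} {M d : ℤ} (hd : 0 < d)
    (hper : ∀ z, M ≤ z → W z = W (z + d)) {x x' : ℤ} {ℓ ℓ' : ℕ}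
    (hx : M ≤ x) (hx' : M ≤ x') (hℓ : ℓ + d.toNat ≤ ℓ') :
    seg W x ℓ <:+: seg W x' ℓ' := by
  set r := (x - x') % d with hr
  have hr0 : 0 ≤ r := Int.emod_nonneg _ (ne_of_gt hd)
  have hrd : r < d := Int.emod_lt_of_pos _ hd
  have hdvd : d ∣ (x' + r) - x := by
    have h1 := Int.mul_ediv_add_emod (x - x') d
    refine ⟨-((x - x') / d), ?_⟩
    have h2 : d * -((x - x') / d) = -(d * ((x - x') / d)) := by ring
    omega
  have heq : seg W x ℓ = seg W (x' + r) ℓ :=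
    seg_congr_mod hd hper hx (by omega) hdvd ℓ
  rw [heq]
  apply seg_contain W (by omega)
  have hdt : (d.toNat : ℤ) = d := Int.toNat_of_nonneg (le_of_lt hd)
  omega

lemma seg_reverse (W : ℤ → A) (x : ℤ) (ℓ : ℕ) :
    (seg W x ℓ).reverse = seg (fun z => W (-1 - z)) (-(x + ℓ)) ℓ := by
  apply List.ext_getElem (by simp)
  intro t h1 h2
  have ht : t < ℓ := by simpa using h2
  rw [List.getElem_reverse]
  simp only [seg, List.getElem_map, List.getElem_range, length_seg, List.length_map,
    List.length_range]
  congr 1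
  omega

lemma exists_le_pair (f : ℕ → ℕ) : ∃ i j, i < j ∧ f i ≤ f j := by
  obtain ⟨i, hi⟩ := Nat.sInf_mem (Set.range_nonempty f)
  exact ⟨i, i + 1, by omega, by rw [hi]; exact Nat.sInf_le ⟨i + 1, rfl⟩⟩

/-- Lemma D : any sequence of segments of an ultimately periodic word, with
positions bounded from below, contains a good pair for the infix order. -/
lemma lemD (W : ℤ → A) (M d : ℤ) (hd : 0 < d) (hper : ∀ z, M ≤ z → W z = W (z + d))
    (p : ℕ → ℤ) (ℓ : ℕ → ℕ) (C : ℤ) (hp : ∀ k, C ≤ p k) :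
    ∃ i j, i < j ∧ seg W (p i) (ℓ i) <:+: seg W (p j) (ℓ j) := by
  by_cases hT : {k | M ≤ p k}.Infinite
  · set T := {k | M ≤ p k} with hTdef
    by_cases hΛ : ∃ Λ, ∀ k ∈ T, ℓ k ≤ Λ
    · -- bounded lengths : finitely many possible segments, pigeonhole
      obtain ⟨Λ, hΛ⟩ := hΛ
      have hnorm : ∀ k ∈ T, seg W (p k) (ℓ k) =
          seg W (M + (p k - M) % d) (ℓ k) := by
        intro k hk
        refine seg_congr_mod hd hper hk (by
          have := Int.emod_nonneg (p k - M) (ne_of_gt hd); omega) ?_ (ℓ k)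
        have h1 := Int.mul_ediv_add_emod (p k - M) d
        refine ⟨-((p k - M) / d), ?_⟩
        have h2 : d * -((p k - M) / d) = -(d * ((p k - M) / d)) := by ring
        omega
      obtain ⟨σ, hσ⟩ := pigeon T hT (fun k => ((M + (p k - M) % d), ℓ k))
        ((Finset.Icc M (M + d - 1)) ×ˢ (Finset.range (Λ + 1))) (by
          intro k hk
          simp only [Finset.mem_product, Finset.mem_Icc, Finset.mem_range]
          have h1 := Int.emod_nonneg (p k - M) (ne_of_gt hd)
          have h2 := Int.emod_lt_of_pos (p k - M) hd
          exact ⟨⟨by omega, by omega⟩, by have := hΛ k hk; omega⟩)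
      obtain ⟨i, hiT⟩ := hσ.nonempty
      obtain ⟨j, hjT, hji⟩ := hσ.exists_gt i
      refine ⟨i, j, hji, ?_⟩
      have e1 := hnorm i hiT.1
      have e2 := hnorm j hjT.1
      have hpair : ((M + (p i - M) % d), ℓ i) = ((M + (p j - M) % d), ℓ j) :=
        hiT.2.trans hjT.2.symm
      have hpp : M + (p i - M) % d = M + (p j - M) % d := congrArg Prod.fst hpair
      have hll : ℓ i = ℓ j := congrArg Prod.snd hpair
      rw [e1, e2, hpp, hll]
    · -- unbounded lengths
      push_neg at hΛ
      obtain ⟨i, hiT⟩ := hT.nonempty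
      obtain ⟨j, hjT, hjl⟩ := hΛ ((Finset.range (i + 1)).sup ℓ + ℓ i + d.toNat)
      have hji : i < j := by
        by_contra hc
        push_neg at hc
        have : ℓ j ≤ (Finset.range (i + 1)).sup ℓ :=
          Finset.le_sup (Finset.mem_range.mpr (by omega))
        omega
      exact ⟨i, j, hji, seg_infix_periodic hd hper hiT hjT (by omega)⟩
  · -- p k < M infinitely often : finitely many positions, use prefix chains
    rw [Set.not_infinite] at hT
    have hT' : {k | p k < M}.Infinite := by
      have : {k | p k < M} = {k | M ≤ p k}ᶜ := by
        ext k; simp [not_le]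
      rw [this]
      exact Set.infinite_of_finite_compl (by simpa using hT)
    obtain ⟨σ, hσ⟩ := pigeon _ hT' p (Finset.Icc C (M - 1)) (by
      intro k hk
      simp only [Finset.mem_Icc]
      exact ⟨hp k, by have := hk; simp only [Set.mem_setOf_eq] at this; omega⟩)
    -- enumerate the fiber, find a pair with increasing lengths
    have hne := hσ
    set S := {k | k ∈ {k | p k < M} ∧ p k = σ} with hSdef
    have hmem : ∀ n, Nat.nth (· ∈ S) n ∈ S := fun n => Nat.nth_mem_of_infinite hσ n
    obtain ⟨i, j, hij, hle⟩ := exists_le_pair (fun n => ℓ (Nat.nth (· ∈ S) n))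
    refine ⟨Nat.nth (· ∈ S) i, Nat.nth (· ∈ S) j, (Nat.nth_lt_nth hσ).mpr hij, ?_⟩
    rw [(hmem i).2, (hmem j).2]
    exact seg_contain W le_rfl (by omega)

lemma list_eq_nil_of_isEmpty [IsEmpty A] (l : List A) : l = [] := by
  cases l with
  | nil => rfl
  | cons a _ => exact (IsEmpty.false a).elim

lemma infix_drop_take {u v : List A} (h : u <:+: v) :
    ∃ m, m + u.length ≤ v.length ∧ u = (v.drop m).take u.length := by
  obtain ⟨pre, post, hh⟩ := h
  refine ⟨pre.length, ?_, ?_⟩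
  · have := congrArg List.length hh
    simp at this
    omega
  · rw [← hh, List.append_assoc, List.drop_left, List.take_left]

lemma exists_chain_subseq {L : Set (List A)} (hL : IsWqoOn L (· <:+: ·))
    (g : ℕ → List A) (hg : ∀ n, g n ∈ L) :
    ∃ φ : ℕ → ℕ, StrictMono φ ∧ ∀ k, g (φ k) <:+: g (φ (k + 1)) := by
  classical
  set B := {i | ∀ j, i < j → ¬ g i <:+: g j} with hB
  have hBfin : B.Finite := by
    by_contra hBinf
    have hBinf : B.Infinite := hBinf
    have he : ∀ n, Nat.nth (· ∈ B) n ∈ B := fun n => Nat.nth_mem_of_infinite hBinf n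
    obtain ⟨i, j, hij, hinf⟩ := hL (fun n => g (Nat.nth (· ∈ B) n)) (fun n => hg _)
    exact (he i) (Nat.nth (· ∈ B) j) ((Nat.nth_lt_nth hBinf).mpr hij) hinf
  obtain ⟨Mb, hMb⟩ := hBfin.bddAbove
  set N := Mb + 1 with hN
  have hstep : ∀ xx : ℕ, ∃ y, xx < y ∧ (N ≤ xx → g xx <:+: g y) := by
    intro xx
    by_cases hx : N ≤ xx
    · have hxB : xx ∉ B := by
        intro hxB
        have := hMb hxB
        omega
      simp only [hB, Set.mem_setOf_eq] at hxB
      push_neg at hxB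
      obtain ⟨j, hj1, hj2⟩ := hxB
      exact ⟨j, hj1, fun _ => hj2⟩
    · exact ⟨xx + 1, by omega, fun h => absurd h hx⟩
  choose nxt hlt hrel using hstep
  refine ⟨fun k => nxt^[k] N, strictMono_nat_of_lt_succ (fun m => by
    rw [Function.iterate_succ_apply']
    exact hlt _), ?_⟩
  have hge : ∀ k, N ≤ nxt^[k] N := by
    intro k
    induction k with
    | zero => simp
    | succ m ih =>
      rw [Function.iterate_succ_apply']
      have := hlt (nxt^[m] N)
      omega
  intro k
  show g (nxt^[k] N) <:+: g (nxt^[k+1] N)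
  rw [Function.iterate_succ_apply']
  exact hrel _ (hge k)

lemma main_hard {L : Set (List A)} (hwqo : IsWqoOn L (· <:+: ·))
    (n : ℕ) (w : Fin n → List A)
    (hbd : ∀ x ∈ L, ∃ c : Fin n → ℕ, x = (List.ofFn fun i : Fin n => wpow (w i) (c i)).flatten)
    (f : ℕ → List A) (hf : ∀ k, ∃ vv ∈ L, f k <:+: vv) :
    ∃ i j, i < j ∧ f i <:+: f j := by
  classical
  rcases isEmpty_or_nonempty A with hA | hA
  · refine ⟨0, 1, by omega, ?_⟩
    rw [list_eq_nil_of_isEmpty (f 0), list_eq_nil_of_isEmpty (f 1)]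
  obtain ⟨dflt⟩ := hA
  choose g hgL hginf using hf
  obtain ⟨φ, hφmono, hφchain⟩ := exists_chain_subseq hwqo g hgL
  set v : ℕ → List A := fun k => g (φ k) with hv
  set u : ℕ → List A := fun k => f (φ k) with hu
  suffices hsuff : ∃ i j, i < j ∧ u i <:+: u j by
    obtain ⟨i, j, hij, hinf⟩ := hsuff
    exact ⟨φ i, φ j, hφmono hij, hinf⟩
  have huv : ∀ k, u k <:+: v k := fun k => hginf (φ k)
  set ws : List (List A) := List.ofFn w with hws
  have hmemv : ∀ k, MemB ws (v k) := by
    intro k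
    obtain ⟨c, hc⟩ := hbd (v k) (hgL (φ k))
    rw [hc]
    exact MemB_ofFn n w c
  choose α tl hαβ using hφchain
  have hαβ' : ∀ k, v (k + 1) = α k ++ (v k ++ tl k) := by
    intro k
    show g (φ (k + 1)) = _
    rw [← hαβ k]
    simp
    rfl
  set Aoff : ℕ → ℕ := fun k => ∑ i ∈ Finset.range k, (α i).length with hAoff
  have hAoff_succ : ∀ k, Aoff (k + 1) = Aoff k + (α k).length := by
    intro k
    simp [hAoff, Finset.sum_range_succ]
  set lk : ℕ → ℤ := fun k => -(Aoff k : ℤ) with hlk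
  set rk : ℕ → ℤ := fun k => lk k + (v k).length with hrk
  have hlen_succ : ∀ k, (v (k + 1)).length = (α k).length + (v k).length + (tl k).length := by
    intro k
    rw [hαβ' k]
    simp only [List.length_append]
    omega
  have hlk_succ : ∀ k, lk (k + 1) = lk k - (α k).length := by
    intro k
    simp [hlk, hAoff_succ k]
    push_cast
    ring
  have hrk_succ : ∀ k, rk (k + 1) = rk k + (tl k).length := by
    intro k
    simp only [hrk, hlk_succ k, hlen_succ k]
    push_cast
    ring
  have hlk_anti : ∀ {k k'}, k ≤ k' → lk k' ≤ lk k := by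
    intro k k' h
    induction k' with
    | zero => have : k = 0 := by omega
              simp [this]
    | succ m ih =>
      rcases Nat.lt_or_ge k (m + 1) with h2 | h2
      · have := ih (by omega)
        rw [hlk_succ m]
        omega
      · have : k = m + 1 := by omega
        simp [this]
  have hrk_mono : ∀ {k k'}, k ≤ k' → rk k ≤ rk k' := by
    intro k k' h
    induction k' with
    | zero => have : k = 0 := by omega
              simp [this]
    | succ m ih =>
      rcases Nat.lt_or_ge k (m + 1) with h2 | h2
      · have := ih (by omega)
        rw [hrk_succ m]
        omega
      · have : k = m + 1 := by omega
        simp [this]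
  have hlk0 : ∀ k, lk k ≤ 0 := by
    intro k
    simp [hlk]
  have hrk0 : ∀ k, 0 ≤ rk k := by
    intro k
    have h1 : rk 0 ≤ rk k := hrk_mono (Nat.zero_le k)
    have h2 : rk 0 = (v 0).length := by simp [hrk, hlk, hAoff]
    omega
  -- the limit word
  set W : ℤ → A := fun z =>
    if h : ∃ k, lk k ≤ z ∧ z < rk k then (v h.choose).getD (z + (Aoff h.choose : ℤ)).toNat dflt
    else dflt with hW
  -- agreement between levels
  have K1 : ∀ k k', k ≤ k' → ∀ z, lk k ≤ z → z < rk k →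
      (v k').getD (z + (Aoff k' : ℤ)).toNat dflt = (v k).getD (z + (Aoff k : ℤ)).toNat dflt := by
    intro k k' hkk'
    obtain ⟨m, rfl⟩ := Nat.le.dest hkk'
    induction m with
    | zero => intro z _ _; rfl
    | succ mm ih =>
      intro z hz1 hz2
      have hKm : k + (mm + 1) = (k + mm) + 1 := by omega
      rw [hKm]
      have hvz : (v (k + mm + 1)) = α (k + mm) ++ ((v (k + mm)) ++ tl (k + mm)) :=
        hαβ' (k + mm)
      have hz1' : lk (k + mm) ≤ z := le_trans (hlk_anti (by omega)) hz1
      have hz2' : z < rk (k + mm) := lt_of_lt_of_le hz2 (hrk_mono (by omega))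
      have hidx : (z + (Aoff (k + mm + 1) : ℤ)).toNat =
          (α (k + mm)).length + (z + (Aoff (k + mm) : ℤ)).toNat := by
        have hA1 : Aoff (k + mm + 1) = Aoff (k + mm) + (α (k + mm)).length :=
          hAoff_succ (k + mm)
        have h0 : (0 : ℤ) ≤ z + (Aoff (k + mm) : ℤ) := by
          have h := hz1'
          simp only [hlk] at h
          omega
        omega
      rw [hvz]
      rw [hidx]
      rw [List.getD_append_right _ _ _ _ (Nat.le_add_right _ _)]
      rw [Nat.add_sub_cancel_left]
      have hin : (z + (Aoff (k + mm) : ℤ)).toNat < (v (k + mm)).length := by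
        have h := hz2'
        have h2 : rk (k + mm) = -(Aoff (k + mm) : ℤ) + ((v (k + mm)).length : ℤ) := rfl
        have h3 : lk (k + mm) = -(Aoff (k + mm) : ℤ) := rfl
        omega
      rw [List.getD_append _ _ _ _ hin]
      exact ih (by omega) z hz1 hz2
  have K2 : ∀ k z, lk k ≤ z → z < rk k →
      W z = (v k).getD (z + (Aoff k : ℤ)).toNat dflt := by
    intro k z hz1 hz2
    have hex : ∃ k', lk k' ≤ z ∧ z < rk k' := ⟨k, hz1, hz2⟩
    rw [hW]
    simp only
    rw [dif_pos hex]
    rcases le_total k hex.choose with h | h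
    · exact K1 k hex.choose h z hz1 hz2
    · exact (K1 hex.choose k h z hex.choose_spec.1 hex.choose_spec.2).symm
  have K3 : ∀ k (x : ℤ) (ℓ : ℕ), lk k ≤ x → x + ℓ ≤ rk k →
      seg W x ℓ = ((v k).drop (x + (Aoff k : ℤ)).toNat).take ℓ := by
    intro k x ℓ hx1 hx2
    have hm0 : (0 : ℤ) ≤ x + (Aoff k : ℤ) := by
      have := hx1
      simp only [hlk] at this
      omega
    have hmb : (x + (Aoff k : ℤ)).toNat + ℓ ≤ (v k).length := by
      have := hx2
      simp only [hrk, hlk] at this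
      omega
    apply List.ext_getElem
    · simp
      omega
    · intro t h1 h2
      have ht : t < ℓ := by simpa using h1
      simp only [seg, List.getElem_map, List.getElem_range, List.getElem_take,
        List.getElem_drop]
      have hz1 : lk k ≤ x + (t : ℤ) := by omega
      have hz2 : x + (t : ℤ) < rk k := by
        simp only [hrk, hlk]
        simp only [hrk, hlk] at hx2
        omega
      rw [K2 k (x + (t : ℤ)) hz1 hz2]
      have hidx : (x + (t : ℤ) + (Aoff k : ℤ)).toNat = (x + (Aoff k : ℤ)).toNat + t := by
        omega
      rw [hidx, List.getD_eq_getElem _ _ (by omega)]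
  -- positions of the u k inside W
  have hpos : ∀ k, ∃ x : ℤ, u k = seg W x (u k).length ∧ lk k ≤ x ∧
      x + (u k).length ≤ rk k := by
    intro k
    obtain ⟨m, hm1, hm2⟩ := infix_drop_take (huv k)
    refine ⟨(m : ℤ) - (Aoff k : ℤ), ?_, ?_, ?_⟩
    · rw [K3 k _ _ (by simp only [hlk]; omega) (by simp only [hrk, hlk]; omega)]
      rw [(by omega : ((m : ℤ) - (Aoff k : ℤ) + (Aoff k : ℤ)).toNat = m)]
      exact hm2
    · simp only [hlk]; omega
    · simp only [hrk, hlk]; omega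
  choose x hx1 hx2 hx3 using hpos
  set q : ℕ → ℤ := fun k => x k + (u k).length with hq
  -- right periodicity
  have hRper : ∃ M d : ℤ, 0 < d ∧ ∀ z, M ≤ z → W z = W (z + d) := by
    by_cases hri : ∀ m : ℕ, ∃ k, (m : ℤ) ≤ rk k
    · have hpre : ∀ ℓ : ℕ, ∃ vv, MemB ws vv ∧ prefW (fun t : ℕ => W t) ℓ <:+: vv := by
        intro ℓ
        obtain ⟨k, hk⟩ := hri ℓ
        refine ⟨v k, hmemv k, ?_⟩
        have hpw : prefW (fun t : ℕ => W t) ℓ = seg W 0 ℓ := by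
          apply List.map_congr_left
          intro t _
          simp
        rw [hpw, K3 k 0 ℓ (hlk0 k) (by omega)]
        exact drop_take_infix _ _ _
      obtain ⟨M, d, hd, hper⟩ := lemP ws _ hpre
      refine ⟨(M : ℤ), (d : ℤ), by exact_mod_cast hd, ?_⟩
      intro z hz
      have hz0 : (0 : ℤ) ≤ z := le_trans (by positivity) hz
      have := hper z.toNat (by omega)
      have e1 : ((z.toNat : ℕ) : ℤ) = z := by omega
      have e2 : ((z.toNat + d : ℕ) : ℤ) = z + (d : ℤ) := by push_cast; omega
      rw [e1, e2] at this
      exact this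
    · push_neg at hri
      obtain ⟨m, hm⟩ := hri
      have hdf : ∀ z' : ℤ, (m : ℤ) ≤ z' → W z' = dflt := by
        intro z' hz'
        rw [hW]
        simp only
        rw [dif_neg]
        rintro ⟨k, h1, h2⟩
        have := hm k
        omega
      exact ⟨(m : ℤ), 1, one_pos, fun z hz => by rw [hdf z hz, hdf (z + 1) (by omega)]⟩
  obtain ⟨MR, dR, hdR, hperR⟩ := hRper
  -- left periodicity (of the mirrored word)
  set Wl : ℤ → A := fun z => W (-1 - z) with hWl
  have hLper : ∃ M d : ℤ, 0 < d ∧ ∀ z, M ≤ z → Wl z = Wl (z + d) := by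
    by_cases hli : ∀ m : ℕ, ∃ k, lk k ≤ -(m : ℤ)
    · set ws' := (ws.map List.reverse).reverse with hws'
      have hpre : ∀ ℓ : ℕ, ∃ vv, MemB ws' vv ∧ prefW (fun t : ℕ => Wl t) ℓ <:+: vv := by
        intro ℓ
        obtain ⟨k, hk⟩ := hli ℓ
        refine ⟨(v k).reverse, MemB_reverse (hmemv k), ?_⟩
        have hrev : prefW (fun t : ℕ => Wl t) ℓ = (seg W (-(ℓ : ℤ)) ℓ).reverse := by
          rw [seg_reverse]
          apply List.map_congr_left
          intro t _
          simp [hWl]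
        rw [hrev, K3 k _ _ hk (by have := hrk0 k; omega)]
        rw [List.reverse_infix]
        exact drop_take_infix _ _ _
      obtain ⟨M, d, hd, hper⟩ := lemP ws' _ hpre
      refine ⟨(M : ℤ), (d : ℤ), by exact_mod_cast hd, ?_⟩
      intro z hz
      have hz0 : (0 : ℤ) ≤ z := le_trans (by positivity) hz
      have := hper z.toNat (by omega)
      have e1 : ((z.toNat : ℕ) : ℤ) = z := by omega
      have e2 : ((z.toNat + d : ℕ) : ℤ) = z + (d : ℤ) := by push_cast; omega
      rw [e1, e2] at this
      exact this
    · push_neg at hli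
      obtain ⟨m, hm⟩ := hli
      have hdf : ∀ z' : ℤ, (m : ℤ) ≤ z' → Wl z' = dflt := by
        intro z' hz'
        rw [hWl]
        simp only
        rw [hW]
        simp only
        rw [dif_neg]
        rintro ⟨k, h1, h2⟩
        have := hm k
        omega
      exact ⟨(m : ℤ), 1, one_pos, fun z hz => by rw [hdf z hz, hdf (z + 1) (by omega)]⟩
  obtain ⟨ML, dL, hdL, hperL⟩ := hLper
  have hrev_u : ∀ k, (u k).reverse = seg Wl (-(q k)) (u k).length := by
    intro k
    conv_lhs => rw [hx1 k]
    rw [seg_reverse]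
  -- final case analysis
  by_cases hCase1 : ∃ C : ℤ, {k | C ≤ x k}.Infinite
  · obtain ⟨C, hC⟩ := hCase1
    have he : ∀ m, C ≤ x (Nat.nth (fun k => C ≤ x k) m) := fun m =>
      Nat.nth_mem_of_infinite hC m
    obtain ⟨i, j, hij, hseg⟩ := lemD W MR dR hdR hperR
      (fun m => x (Nat.nth (fun k => C ≤ x k) m))
      (fun m => (u (Nat.nth (fun k => C ≤ x k) m)).length) C he
    refine ⟨_, _, (Nat.nth_lt_nth hC).mpr hij, ?_⟩
    rw [hx1 (Nat.nth (fun k => C ≤ x k) i), hx1 (Nat.nth (fun k => C ≤ x k) j)]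
    exact hseg
  · push_neg at hCase1
    by_cases hCase2 : ∃ C : ℤ, {k | q k ≤ C}.Infinite
    · obtain ⟨C, hC⟩ := hCase2
      have he : ∀ m, q (Nat.nth (fun k => q k ≤ C) m) ≤ C := fun m =>
        Nat.nth_mem_of_infinite hC m
      obtain ⟨i, j, hij, hseg⟩ := lemD Wl ML dL hdL hperL
        (fun m => -(q (Nat.nth (fun k => q k ≤ C) m)))
        (fun m => (u (Nat.nth (fun k => q k ≤ C) m)).length) (-C)
        (fun m => by
          show -C ≤ -q (Nat.nth (fun k => q k ≤ C) m)
          have := he m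
          omega)
      refine ⟨_, _, (Nat.nth_lt_nth hC).mpr hij, ?_⟩
      rw [← List.reverse_infix]
      rw [hrev_u, hrev_u]
      exact hseg
    · push_neg at hCase2
      have hfin : ({k | x 0 ≤ x k} ∪ ({k | q k ≤ q 0} ∪ {0})).Finite :=
        (hCase1 (x 0)).union ((hCase2 (q 0)).union (Set.finite_singleton 0))
      obtain ⟨j, hj⟩ := hfin.infinite_compl.nonempty
      simp only [Set.mem_compl_iff, Set.mem_union, Set.mem_setOf_eq,
        Set.mem_singleton_iff, not_or, not_le] at hj
      obtain ⟨hj1, hj2, hj3⟩ := hj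
      refine ⟨0, j, by omega, ?_⟩
      rw [hx1 0, hx1 j]
      apply seg_contain W (le_of_lt hj1)
      have h0 : x 0 + ((u 0).length : ℤ) = q 0 := rfl
      have hjq : x j + ((u j).length : ℤ) = q j := rfl
      omega

end BWQO

/-- A bounded language is well-quasi-ordered by the infix relation
iff its infix-downward closure is. -/
theorem bounded_wqo_infix_iff_downward_closure_wqo
    {A : Type*} [Fintype A] (L : Set (List A)) (hbd : IsBoundedLang L) :
    IsWqoOn L (· <:+: ·)
    ↔
    IsWqoOn {u | ∃ v ∈ L, u <:+: v} (· <:+: ·) := by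
  constructor
  · intro hL f hf
    obtain ⟨n, w, hbd'⟩ := hbd
    exact BWQO.main_hard hL n w hbd' f hf
  · intro hD f hf
    exact hD f (fun n => ⟨f n, hf n, List.infix_refl _⟩)
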